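/- Let A be a simple Artinian ring and let (R',P) be a strict fractional prime in A such that R' is a Goldie ring. Then every regular element of R' is invertible in A, and every element of A can be written as s⁻¹r with r ∈ R' and s a regular element of R' (that is, the Ore localization of R' at its regular elements equals A). -/

import Mathlib

open Pointwise

/-- `P` is a two-sided ideal of the subring `R` of `A`. -/
def IsIdealOf {A : Type*} [Ring A] (R : Subring A) (P : Set A) : Prop :=
  P ⊆ (R : Set A) ∧ (0 : A) ∈ P ∧ (∀ x ∈ P, ∀ y ∈ P, x + y ∈ P) ∧ (∀ x ∈ P, -x ∈ P) ∧
    (∀ r ∈ R, ∀ p ∈ P, r * p ∈ P) ∧ (∀ r ∈ R, ∀ p ∈ P, p * r ∈ P)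

/-- `(R, P)` is a prime in the ring `A`. -/
def IsPrimeIn {A : Type*} [Ring A] (R : Subring A) (P : Set A) : Prop :=
  IsIdealOf R P ∧ ∀ x y : A, (∀ r ∈ R, x * r * y ∈ P) → x ∈ P ∨ y ∈ P

/-- `(R, P)` is a strict fractional prime in the ring `A`. -/
def IsStrictFractionalPrime {A : Type*} [Ring A] (R : Subring A) (P : Set A) : Prop :=
  IsPrimeIn R P ∧ ∀ r : A, r ≠ 0 → ∃ x ∈ R, ∃ y ∈ R, x * r * y ≠ 0 ∧ x * r * y ∈ R

/-- The set of elements of the subring `R` which are regular in `R`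
(non-zero-divisors of the ring `R`). -/
def regularIn {A : Type*} [Ring A] (R : Subring A) : Set A :=
  {x : A | x ∈ R ∧ (∀ y ∈ R, x * y = 0 → y = 0) ∧ (∀ y ∈ R, y * x = 0 → y = 0)}

/-- A ring is Goldie if its set of regular elements satisfies the left and right Ore
conditions and the corresponding Ore localization is a semisimple ring. -/
def IsGoldieRing (R : Type*) [Ring R] : Prop :=
  (∀ (r : R), ∀ s ∈ nonZeroDivisors R, ∃ r' : R, ∃ s' ∈ nonZeroDivisors R, s' * r = r' * s) ∧
  (∀ (r : R), ∀ s ∈ nonZeroDivisors R, ∃ r' : R, ∃ s' ∈ nonZeroDivisors R, r * s' = s * r') ∧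
  ∃ _i : OreLocalization.OreSet (nonZeroDivisors R),
    IsSemisimpleRing (OreLocalization (nonZeroDivisors R) R)

/-- `A^P`, the set of elements of `A` stabilizing `P` on both sides. -/
def stabilizerSet {A : Type*} [Ring A] (P : Set A) : Set A :=
  {a : A | (∀ p ∈ P, a * p ∈ P) ∧ ∀ p ∈ P, p * a ∈ P}

/-- The fractional `R`-ideals of `A`. -/
def IsFractionalIdeal {A : Type*} [Ring A] (R : Subring A) (I : Set A) : Prop :=
  ((0 : A) ∈ I ∧ (∀ x ∈ I, ∀ y ∈ I, x + y ∈ I) ∧ (∀ x ∈ I, -x ∈ I)) ∧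
  (∀ r ∈ R, ∀ x ∈ I, r * x ∈ I) ∧ (∀ r ∈ R, ∀ x ∈ I, x * r ∈ I) ∧
  (∃ u ∈ I, u ∈ regularIn R) ∧ (∃ r ∈ regularIn R, ∀ x ∈ I, r * x ∈ (R : Set A))

/-- The fractional ideal `RaR` generated by an element `a ∈ A`. -/
def genFracIdeal {A : Type*} [Ring A] (R : Subring A) (a : A) : Set A :=
  (R : Set A) * {a} * (R : Set A)

/-- `v(I) = (P : I) = {a ∈ A ∣ aI ⊆ P}`. -/
def vP {A : Type*} [Ring A] (P I : Set A) : Set A :=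
  {a : A | ∀ x ∈ I, a * x ∈ P}

/-- The additive subgroup generated by the `n`-fold products of elements of `P`. -/
def idealPow {A : Type*} [Ring A] (P : Set A) (n : ℕ) : Set A :=
  (AddSubgroup.closure (P ^ n) : Set A)

/-- `C(P)`: the elements of `R` which are regular modulo `P`. -/
def CP {A : Type*} [Ring A] (R : Subring A) (P : Set A) : Set A :=
  {x : A | x ∈ R ∧ (∀ y ∈ R, x * y ∈ P → y ∈ P) ∧ ∀ y ∈ R, y * x ∈ P → y ∈ P}

/-- `R` is an order in `A`: every regular element of `R` is invertible in `A` and every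
element of `A` is of the form `s⁻¹ * r` and of the form `r' * s'⁻¹` with `r, r' ∈ R` and
`s, s'` regular in `R`. -/
def IsOrderIn {A : Type*} [Ring A] (R : Subring A) : Prop :=
  (∀ s ∈ regularIn R, IsUnit s) ∧
  (∀ a : A, ∃ s ∈ regularIn R, ∃ r ∈ (R : Set A), s * a = r) ∧
  (∀ a : A, ∃ s ∈ regularIn R, ∃ r ∈ (R : Set A), a * s = r)

/-- `R` is a Dubrovin valuation ring of `A` with associated ideal `P`:
`P` is a two-sided ideal of `R` such that `R/P` is a simple Artinian ring and for every
`a ∈ A \ R` there are `x, y ∈ R` with `xa ∈ R \ P` and `ay ∈ R \ P`. -/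
def IsDubrovinValuation {A : Type*} [Ring A] (R : Subring A) (P : Set A) : Prop :=
  IsIdealOf R P ∧
  (∀ Q : TwoSidedIdeal R, (∀ x : R, x ∈ Q ↔ (x : A) ∈ P) →
    IsSimpleRing Q.ringCon.Quotient ∧ IsArtinianRing Q.ringCon.Quotient) ∧
  ∀ a : A, a ∉ R →
    (∃ x ∈ R, x * a ∈ R ∧ x * a ∉ P) ∧ (∃ y ∈ R, a * y ∈ R ∧ a * y ∉ P)

/-- `P` coincides with the Jacobson radical of the subring `R` (the intersection of the
maximal left ideals of `R`). -/
def IsJacobsonRadicalOf {A : Type*} [Ring A] (R : Subring A) (P : Set A) : Prop :=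
  ∀ x : R, (x : A) ∈ P ↔ x ∈ (⊥ : Ideal R).jacobson


section Aux

variable {A : Type*} [Ring A] {R' : Subring A}

/-- Right multiplication by an element of `R'` that is a non-zero-divisor in `R'`
is injective on `A`, assuming strict fractionality. -/
lemma dub_rmul_cancel
    (hfrac : ∀ r : A, r ≠ 0 → ∃ x ∈ R', ∃ y ∈ R', x * r * y ≠ 0 ∧ x * r * y ∈ R')
    (ore2 : ∀ (r : R'), ∀ s ∈ nonZeroDivisors R', ∃ r' : R', ∃ s' ∈ nonZeroDivisors R',
      r * s' = s * r')
    (s : R') (hs : s ∈ nonZeroDivisors R') {z : A} (hz : z * (s : A) = 0) : z = 0 := by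
  by_contra hz0
  obtain ⟨x, hx, y, hy, hne, hmem⟩ := hfrac z hz0
  obtain ⟨r', s', hs', heq⟩ := ore2 ⟨y, hy⟩ s hs
  have hyA : y * (s' : A) = (s : A) * (r' : A) := by
    have := congrArg (Subtype.val) heq
    push_cast at this
    exact this
  have h1 : (x * z * y) * (s' : A) = 0 := by
    calc (x * z * y) * (s' : A) = x * z * (y * (s' : A)) := by
          simp only [mul_assoc]
      _ = x * z * ((s : A) * (r' : A)) := by rw [hyA]
      _ = x * (z * (s : A)) * (r' : A) := by simp only [mul_assoc]
      _ = 0 := by rw [hz, mul_zero, zero_mul]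
  have h2 : (⟨x * z * y, hmem⟩ : R') * s' = 0 := by
    apply Subtype.ext
    push_cast
    exact h1
  have h3 := (mem_nonZeroDivisors_iff.mp hs').2 _ h2
  exact hne (by simpa using congrArg Subtype.val h3)

/-- Elements of `R'` that are non-zero-divisors in `R'` are units of `A`. -/
lemma dub_isUnit [IsArtinianRing A]
    (hfrac : ∀ r : A, r ≠ 0 → ∃ x ∈ R', ∃ y ∈ R', x * r * y ≠ 0 ∧ x * r * y ∈ R')
    (ore2 : ∀ (r : R'), ∀ s ∈ nonZeroDivisors R', ∃ r' : R', ∃ s' ∈ nonZeroDivisors R',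
      r * s' = s * r')
    (s : R') (hs : s ∈ nonZeroDivisors R') : IsUnit (s : A) := by
  have hcan : ∀ z : A, z * (s : A) = 0 → z = 0 := fun z hz => dub_rmul_cancel hfrac ore2 s hs hz
  let f : A →ₗ[A] A :=
    { toFun := fun z => z * (s : A)
      map_add' := fun a b => add_mul a b _
      map_smul' := fun a z => by simp [smul_eq_mul, mul_assoc] }
  have hinj : Function.Injective f := by
    intro a b hab
    have h0 : (a - b) * (s : A) = 0 := by
      have : a * (s : A) = b * (s : A) := hab
      rw [sub_mul, this, sub_self]
    exact sub_eq_zero.mp (hcan _ h0)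
  obtain ⟨b, hb⟩ := IsArtinian.surjective_of_injective_endomorphism f hinj 1
  have hb' : b * (s : A) = 1 := hb
  have h2 : (s : A) * b = 1 := by
    have h0 : ((s : A) * b - 1) * (s : A) = 0 := by
      rw [sub_mul, one_mul, mul_assoc, hb', mul_one, sub_self]
    have := hcan _ h0
    rwa [sub_eq_zero] at this
  exact ⟨⟨(s : A), b, h2, hb'⟩, rfl⟩

lemma dub_regular_of_isUnit {s : A} (hmem : s ∈ R') (hu : IsUnit s) : s ∈ regularIn R' := by
  refine ⟨hmem, fun y _ h => ?_, fun y _ h => ?_⟩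
  · calc y = (↑hu.unit⁻¹ : A) * (s * y) := by rw [← mul_assoc, IsUnit.val_inv_mul, one_mul]
      _ = 0 := by rw [h, mul_zero]
  · calc y = (y * s) * (↑hu.unit⁻¹ : A) := by rw [mul_assoc, IsUnit.mul_val_inv, mul_one]
      _ = 0 := by rw [h, zero_mul]

lemma dub_nzd_of_regular {s : A} (hs : s ∈ regularIn R') :
    (⟨s, hs.1⟩ : R') ∈ nonZeroDivisors R' := by
  refine mem_nonZeroDivisors_iff.mpr ⟨fun z hz => Subtype.ext (hs.2.1 z z.2 (by simpa using congrArg Subtype.val hz)), fun z hz => ?_⟩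
  have hA : (z : A) * s = 0 := by
    have := congrArg Subtype.val hz
    push_cast at this
    exact this
  exact Subtype.ext (hs.2.2 z z.2 hA)

end Aux

section Frac

variable {A : Type*} [Ring A]

/-- The subring of left fractions `s⁻¹ r` with `s` a non-zero-divisor of `R'`. -/
def fracSubring (R' : Subring A)
    (ore1 : ∀ (r : R'), ∀ s ∈ nonZeroDivisors R', ∃ r' : R', ∃ s' ∈ nonZeroDivisors R',
      s' * r = r' * s) : Subring A where
  carrier := {a : A | ∃ s : R', s ∈ nonZeroDivisors R' ∧ (s : A) * a ∈ R'}
  zero_mem' := ⟨1, one_mem _, by simpa using R'.zero_mem⟩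
  one_mem' := ⟨1, one_mem _, by simpa using R'.one_mem⟩
  neg_mem' := by
    rintro a ⟨s, hs, h⟩
    exact ⟨s, hs, by simpa [mul_neg] using R'.neg_mem h⟩
  add_mem' := by
    rintro a b ⟨s1, hs1, h1⟩ ⟨s2, hs2, h2⟩
    obtain ⟨r', s', hs', heq⟩ := ore1 s1 s2 hs2
    refine ⟨s' * s1, Submonoid.mul_mem _ hs' hs1, ?_⟩
    have hA : (s' : A) * (s1 : A) = (r' : A) * (s2 : A) := by
      have := congrArg Subtype.val heq; push_cast at this; exact this
    have hrw : ((s' * s1 : R') : A) * (a + b)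
        = (s' : A) * ((s1 : A) * a) + (r' : A) * ((s2 : A) * b) := by
      push_cast
      rw [mul_add]
      congr 1
      · rw [mul_assoc]
      · rw [hA, mul_assoc]
    rw [hrw]
    exact R'.add_mem (R'.mul_mem s'.2 h1) (R'.mul_mem r'.2 h2)
  mul_mem' := by
    rintro a b ⟨s1, hs1, h1⟩ ⟨s2, hs2, h2⟩
    obtain ⟨r', s', hs', heq⟩ := ore1 ⟨(s1 : A) * a, h1⟩ s2 hs2
    refine ⟨s' * s1, Submonoid.mul_mem _ hs' hs1, ?_⟩
    have hA : (s' : A) * ((s1 : A) * a) = (r' : A) * (s2 : A) := by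
      have := congrArg Subtype.val heq; push_cast at this; exact this
    have hrw : ((s' * s1 : R') : A) * (a * b) = (r' : A) * ((s2 : A) * b) := by
      push_cast
      calc (s' : A) * (s1 : A) * (a * b) = ((s' : A) * ((s1 : A) * a)) * b := by
            simp only [mul_assoc]
        _ = ((r' : A) * (s2 : A)) * b := by rw [hA]
        _ = (r' : A) * ((s2 : A) * b) := by rw [mul_assoc]
    rw [hrw]
    exact R'.mul_mem r'.2 h2

variable {R' : Subring A}
  {ore1 : ∀ (r : R'), ∀ s ∈ nonZeroDivisors R', ∃ r' : R', ∃ s' ∈ nonZeroDivisors R',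
      s' * r = r' * s}

lemma mem_fracSubring_iff {a : A} :
    a ∈ fracSubring R' ore1 ↔ ∃ s : R', s ∈ nonZeroDivisors R' ∧ (s : A) * a ∈ R' :=
  Iff.rfl

lemma R'_le_fracSubring {x : A} (hx : x ∈ R') : x ∈ fracSubring R' ore1 :=
  ⟨1, one_mem _, by simpa using hx⟩

/-- Every element of the fraction ring also has a right denominator. -/
lemma fracSubring_right_den [IsArtinianRing A]
    (hfrac : ∀ r : A, r ≠ 0 → ∃ x ∈ R', ∃ y ∈ R', x * r * y ≠ 0 ∧ x * r * y ∈ R')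
    (ore2 : ∀ (r : R'), ∀ s ∈ nonZeroDivisors R', ∃ r' : R', ∃ s' ∈ nonZeroDivisors R',
      r * s' = s * r')
    {b : A} (hb : b ∈ fracSubring R' ore1) :
    ∃ t : R', t ∈ nonZeroDivisors R' ∧ b * (t : A) ∈ R' := by
  obtain ⟨s, hs, hsb⟩ := hb
  obtain ⟨r', t, ht, heq⟩ := ore2 ⟨(s : A) * b, hsb⟩ s hs
  have hA : ((s : A) * b) * (t : A) = (s : A) * (r' : A) := by
    have := congrArg Subtype.val heq; push_cast at this; exact this
  have hu := dub_isUnit hfrac ore2 s hs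
  have h0 : (s : A) * (b * (t : A) - (r' : A)) = 0 := by
    rw [mul_sub, ← mul_assoc, hA, sub_self]
  have h1 : b * (t : A) - (r' : A) = 0 := by
    have := congrArg (fun w => (↑hu.unit⁻¹ : A) * w) h0
    simpa [← mul_assoc, IsUnit.val_inv_mul] using this
  refine ⟨t, ht, ?_⟩
  rw [sub_eq_zero] at h1
  rw [h1]
  exact r'.2

/-- Elements with a right denominator lie in the fraction ring. -/
lemma fracSubring_of_right_den [IsArtinianRing A]
    (hfrac : ∀ r : A, r ≠ 0 → ∃ x ∈ R', ∃ y ∈ R', x * r * y ≠ 0 ∧ x * r * y ∈ R')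
    (ore2 : ∀ (r : R'), ∀ s ∈ nonZeroDivisors R', ∃ r' : R', ∃ s' ∈ nonZeroDivisors R',
      r * s' = s * r')
    (ore1 : ∀ (r : R'), ∀ s ∈ nonZeroDivisors R', ∃ r' : R', ∃ s' ∈ nonZeroDivisors R',
      s' * r = r' * s)
    {a : A} (t : R') (ht : t ∈ nonZeroDivisors R') (h : a * (t : A) ∈ R') :
    a ∈ fracSubring R' ore1 := by
  obtain ⟨r', s', hs', heq⟩ := ore1 ⟨a * (t : A), h⟩ t ht
  have hA : (s' : A) * (a * (t : A)) = (r' : A) * (t : A) := by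
    have := congrArg Subtype.val heq; push_cast at this; exact this
  have hu := dub_isUnit hfrac ore2 t ht
  have h0 : ((s' : A) * a - (r' : A)) * (t : A) = 0 := by
    rw [sub_mul, mul_assoc, hA, sub_self]
  have h2 : (s' : A) * a - (r' : A) = 0 := by
    have := congrArg (fun w => w * (↑hu.unit⁻¹ : A)) h0
    simpa [mul_assoc, IsUnit.mul_val_inv] using this
  have h1 : (s' : A) * a = (r' : A) := sub_eq_zero.mp h2
  exact ⟨s', hs', by rw [h1]; exact r'.2⟩

end Frac

section Transfer

variable {A : Type*} [Ring A] {R' : Subring A}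

set_option maxHeartbeats 800000 in
set_option synthInstance.maxHeartbeats 400000 in
lemma fracSubring_isSemisimple [IsArtinianRing A]
    (hfrac : ∀ r : A, r ≠ 0 → ∃ x ∈ R', ∃ y ∈ R', x * r * y ≠ 0 ∧ x * r * y ∈ R')
    (ore2 : ∀ (r : R'), ∀ s ∈ nonZeroDivisors R', ∃ r' : R', ∃ s' ∈ nonZeroDivisors R',
      r * s' = s * r')
    (ore1 : ∀ (r : R'), ∀ s ∈ nonZeroDivisors R', ∃ r' : R', ∃ s' ∈ nonZeroDivisors R',
      s' * r = r' * s)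
    (hloc : ∃ _i : OreLocalization.OreSet (nonZeroDivisors R'),
      IsSemisimpleRing (OreLocalization (nonZeroDivisors R') R')) :
    IsSemisimpleRing (fracSubring R' ore1) := by
  obtain ⟨oreInst, hss⟩ := hloc
  letI := oreInst
  have hu : ∀ s : nonZeroDivisors R', IsUnit ((s : R') : A) :=
    fun s => dub_isUnit hfrac ore2 s s.2
  let fS : (nonZeroDivisors R') →* Aˣ :=
    { toFun := fun s => (hu s).unit
      map_one' := by
        apply Units.ext
        simp only [IsUnit.unit_spec, Units.val_one]
        push_cast
        rfl
      map_mul' := fun s t => by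
        apply Units.ext
        simp only [IsUnit.unit_spec, Units.val_mul]
        push_cast
        rfl }
  let f : R' →+* A := R'.subtype
  have hf : ∀ s : nonZeroDivisors R', f ↑s = ↑(fS s) := fun s => (IsUnit.unit_spec (hu s)).symm
  let ψ := OreLocalization.universalHom f fS hf
  have hfS_coe : ∀ s : nonZeroDivisors R', (↑(fS s) : A) = ((s : R') : A) :=
    fun s => IsUnit.unit_spec (hu s)
  have hmem : ∀ x, ψ x ∈ fracSubring R' ore1 := by
    intro x
    induction x using OreLocalization.ind with
    | _ r s =>
      rw [OreLocalization.universalHom_apply]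
      refine ⟨(s : R'), s.2, ?_⟩
      have h1 : ((s : R') : A) * ((↑(fS s)⁻¹ : A) * f r) = f r := by
        rw [← mul_assoc, ← hfS_coe s, Units.mul_inv, one_mul]
      rw [h1]
      exact r.2
  let ψ' : OreLocalization (nonZeroDivisors R') R' →+* (fracSubring R' ore1) :=
    ψ.codRestrict _ hmem
  have hker : ∀ z, ψ z = 0 → z = 0 := by
    intro z hz
    induction z using OreLocalization.ind with
    | _ r s =>
      rw [OreLocalization.universalHom_apply] at hz
      have h1 : f r = 0 := by
        have := congrArg (fun w => (↑(fS s) : A) * w) hz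
        simpa [← mul_assoc, Units.mul_inv] using this
      have hr : r = 0 := Subtype.ext h1
      rw [hr, OreLocalization.zero_oreDiv']
  have hinj : Function.Injective ψ' := by
    intro x y hxy
    have h1 : ψ x = ψ y := congrArg Subtype.val hxy
    have h2 : ψ (x - y) = 0 := by rw [ψ.map_sub, h1, sub_self]
    have := hker _ h2
    rwa [sub_eq_zero] at this
  have hsurj : Function.Surjective ψ' := by
    rintro ⟨b, hb⟩
    obtain ⟨s, hs, hsb⟩ := hb
    refine ⟨(⟨(s : A) * b, hsb⟩ : R') /ₒ ⟨s, hs⟩, ?_⟩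
    apply Subtype.ext
    show ψ _ = b
    rw [OreLocalization.universalHom_apply]
    have h1 : f (⟨(s : A) * b, hsb⟩ : R') = (s : A) * b := rfl
    rw [h1, ← mul_assoc]
    have h2 : (↑(fS ⟨s, hs⟩)⁻¹ : A) * (s : A) = 1 := by
      rw [show ((s : A)) = (↑(fS ⟨s, hs⟩) : A) from (hfS_coe ⟨s, hs⟩).symm, Units.inv_mul]
    rw [h2, one_mul]
  exact @RingEquiv.isSemisimpleRing _ _ _ _ (RingEquiv.ofBijective ψ' ⟨hinj, hsurj⟩) hss

end Transfer

section Semisimple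

variable (Q : Type*) [Ring Q]

/-- In a nontrivial semisimple ring there is a nonzero idempotent whose corner is a
division ring. -/
lemma dub_exists_corner_div [Nontrivial Q] [IsSemisimpleRing Q] :
    ∃ e : Q, e ≠ 0 ∧ e * e = e ∧
      ∀ u : Q, u ≠ 0 → e * u * e = u → ∃ v : Q, e * v * e = v ∧ v * u = e ∧ u * v = e := by
  obtain ⟨I, hI⟩ := IsSemisimpleModule.exists_simple_submodule Q Q
  have hIatom : IsAtom I := isSimpleModule_iff_isAtom.mp hI
  obtain ⟨C, hC⟩ := exists_isCompl I
  have h1 : (1 : Q) ∈ I ⊔ C := by rw [hC.sup_eq_top]; trivial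
  obtain ⟨e, he, fl, hfl, hef⟩ := Submodule.mem_sup.mp h1
  have key : ∀ x ∈ I, x * e = x := by
    intro x hx
    have hxe : x * e ∈ I := I.smul_mem x he
    have hxf : x - x * e = x * fl := by
      have h5 : x * e + x * fl = x := by rw [← mul_add, hef, mul_one]
      rw [sub_eq_iff_eq_add']
      exact h5.symm
    have hmem2 : x - x * e ∈ I := I.sub_mem hx hxe
    have hmem3 : x - x * e ∈ C := by rw [hxf]; exact C.smul_mem x hfl
    have : x - x * e ∈ I ⊓ C := ⟨hmem2, hmem3⟩
    rw [hC.inf_eq_bot] at this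
    have h0 : x - x * e = 0 := this
    rw [sub_eq_zero] at h0
    exact h0.symm
  have hidem : e * e = e := key e he
  have hsand : ∀ p : Q, e * (e * p * e) * e = e * p * e := by
    intro p
    have h7 : e * (e * p * e) * e = e * e * p * (e * e) := by simp only [mul_assoc]
    rw [h7, hidem]
  have hne : e ≠ 0 := by
    intro h0
    apply hIatom.1
    rw [eq_bot_iff]
    intro x hx
    have := key x hx
    rw [h0, mul_zero] at this
    simpa [← this] using Submodule.zero_mem ⊥
  have hleft : ∀ u : Q, u ≠ 0 → e * u * e = u → ∃ v : Q, e * v * e = v ∧ v * u = e := by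
    intro u hu hcorner
    have huI : u ∈ I := by
      rw [← hcorner]
      exact I.smul_mem _ he
    have hle : Submodule.span Q {u} ≤ I := by
      rw [Submodule.span_le, Set.singleton_subset_iff]
      exact huI
    have hspan : Submodule.span Q {u} = I := by
      rcases lt_or_eq_of_le hle with hlt | heqq
      · exfalso
        have := hIatom.2 _ hlt
        have hu' : u ∈ Submodule.span Q {u} := Submodule.mem_span_singleton_self u
        rw [this] at hu'
        exact hu (by simpa using hu')
      · exact heqq
    have heSpan : e ∈ Submodule.span Q {u} := by rw [hspan]; exact he
    obtain ⟨b, hb⟩ := Submodule.mem_span_singleton.mp heSpan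
    have hb' : b * u = e := hb
    have heu : e * u = u := by
      conv_lhs => rw [← hcorner]
      rw [← mul_assoc, ← mul_assoc, hidem, hcorner]
    refine ⟨e * b * e, ?_, ?_⟩
    · exact hsand b
    · calc (e * b * e) * u = e * b * (e * u) := by rw [mul_assoc, mul_assoc]
        _ = e * (b * u) := by rw [heu, mul_assoc]
        _ = e * e := by rw [hb']
        _ = e := hidem
  refine ⟨e, hne, hidem, ?_⟩
  intro u hu hcorner
  obtain ⟨v, hv, hvu⟩ := hleft u hu hcorner
  have hvne : v ≠ 0 := by
    intro h
    rw [h, zero_mul] at hvu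
    exact hne hvu.symm
  obtain ⟨w, hw, hwv⟩ := hleft v hvne hv
  have heu : e * u = u := by
    conv_lhs => rw [← hcorner]
    rw [← mul_assoc, ← mul_assoc, hidem, hcorner]
  have hwe : w * e = w := by
    conv_lhs => rw [← hw]
    rw [mul_assoc, hidem]
    exact hw
  have huw : u = w := by
    calc u = e * u := heu.symm
      _ = (w * v) * u := by rw [hwv]
      _ = w * (v * u) := by rw [mul_assoc]
      _ = w * e := by rw [hvu]
      _ = w := hwe
  exact ⟨v, hv, hvu, by rw [huw, hwv]⟩

/-- A proper nonzero two-sided ideal in a semisimple ring yields a nontrivial central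
idempotent. -/
lemma dub_central_idem [IsSemisimpleRing Q]
    (J : Submodule Q Q) (hJr : ∀ x ∈ J, ∀ q : Q, x * q ∈ J) (hbot : J ≠ ⊥) (htop : J ≠ ⊤) :
    ∃ ε : Q, ε ≠ 0 ∧ ε ≠ 1 ∧ ε * ε = ε ∧ ∀ q : Q, ε * q = q * ε := by
  obtain ⟨C, hC⟩ := exists_isCompl J
  have h1 : (1 : Q) ∈ J ⊔ C := by rw [hC.sup_eq_top]; trivial
  obtain ⟨e, he, fl, hfl, hef⟩ := Submodule.mem_sup.mp h1
  have key : ∀ x ∈ J, x * e = x := by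
    intro x hx
    have hxe : x * e ∈ J := J.smul_mem x he
    have hxf : x - x * e = x * fl := by
      have h5 : x * e + x * fl = x := by rw [← mul_add, hef, mul_one]
      rw [sub_eq_iff_eq_add']
      exact h5.symm
    have hmem2 : x - x * e ∈ J := J.sub_mem hx hxe
    have hmem3 : x - x * e ∈ C := by rw [hxf]; exact C.smul_mem x hfl
    have : x - x * e ∈ J ⊓ C := ⟨hmem2, hmem3⟩
    rw [hC.inf_eq_bot] at this
    have h0 : x - x * e = 0 := this
    rw [sub_eq_zero] at h0
    exact h0.symm
  have hidem : e * e = e := key e he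
  have hne : e ≠ 0 := by
    intro h0
    apply hbot
    rw [eq_bot_iff]
    intro x hx
    have := key x hx
    rw [h0, mul_zero] at this
    simpa [← this] using Submodule.zero_mem ⊥
  have hne1 : e ≠ 1 := by
    intro h0
    apply htop
    rw [eq_top_iff]
    intro x _
    have : x * e ∈ J := J.smul_mem x he
    rwa [h0, mul_one] at this
  -- e * q * (1 - e) = 0 for all q
  have heqf : ∀ q : Q, e * q * (1 - e) = 0 := by
    intro q
    have h2 : (e * q) * e = e * q := key _ (hJr e he q)
    rw [mul_sub, mul_one, h2, sub_self]
  -- the left ideal generated by (1-e)*Q*e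
  set G : Set Q := {x | ∃ c q : Q, x = c * ((1 - e) * q * e)} with hG
  have hGsmul : ∀ (c : Q), ∀ x ∈ AddSubgroup.closure G, c * x ∈ AddSubgroup.closure G := by
    intro c x hx
    induction hx using AddSubgroup.closure_induction with
    | mem y hy =>
      obtain ⟨c', q, rfl⟩ := hy
      exact AddSubgroup.subset_closure ⟨c * c', q, (mul_assoc c c' _).symm⟩
    | zero => simpa using AddSubgroup.zero_mem _
    | add y z _ _ hy hz => simpa [mul_add] using AddSubgroup.add_mem _ hy hz
    | neg y _ hy => simpa [mul_neg] using AddSubgroup.neg_mem _ hy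
  let K : Submodule Q Q :=
    { carrier := AddSubgroup.closure G
      add_mem' := fun hx hy => AddSubgroup.add_mem _ hx hy
      zero_mem' := AddSubgroup.zero_mem _
      smul_mem' := fun c x hx => hGsmul c x hx }
  have heK : ∀ y ∈ AddSubgroup.closure G, e * y = 0 := by
    intro y hy
    induction hy using AddSubgroup.closure_induction with
    | mem z hz =>
      obtain ⟨c, q, rfl⟩ := hz
      have h3 : e * c * (1 - e) = 0 := heqf c
      calc e * (c * ((1 - e) * q * e)) = (e * c * (1 - e)) * (q * e) := by
            simp only [mul_assoc]
        _ = 0 := by rw [h3, zero_mul]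
    | zero => simp
    | add y z _ _ hy hz => rw [mul_add, hy, hz, add_zero]
    | neg y _ hy => rw [mul_neg, hy, neg_zero]
  have hK0 : ∀ x ∈ K, x = 0 := by
    obtain ⟨D, hD⟩ := exists_isCompl K
    have h1' : (1 : Q) ∈ K ⊔ D := by rw [hD.sup_eq_top]; trivial
    obtain ⟨k, hk, l, hl, hkl⟩ := Submodule.mem_sup.mp h1'
    intro x hx
    have hxk : x * k = 0 := by
      induction hx using AddSubgroup.closure_induction with
      | mem z hz =>
        obtain ⟨c, q, rfl⟩ := hz
        have h4 : e * k = 0 := heK k hk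
        calc (c * ((1 - e) * q * e)) * k = c * ((1 - e) * q) * (e * k) := by
              simp only [mul_assoc]
          _ = 0 := by rw [h4, mul_zero]
      | zero => simp
      | add y z _ _ hy hz => rw [add_mul, hy, hz, add_zero]
      | neg y _ hy => rw [neg_mul, hy, neg_zero]
    have hxl : x = x * l := by
      have : x * (k + l) = x := by rw [hkl, mul_one]
      rw [mul_add, hxk, zero_add] at this
      exact this.symm
    have hxD : x ∈ D := by rw [hxl]; exact D.smul_mem x hl
    have : x ∈ K ⊓ D := ⟨hx, hxD⟩
    rw [hD.inf_eq_bot] at this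
    exact this
  have hfqe : ∀ q : Q, (1 - e) * q * e = 0 := by
    intro q
    exact hK0 _ (AddSubgroup.subset_closure ⟨1, q, by rw [one_mul]⟩)
  have hcomm : ∀ q : Q, e * q = q * e := by
    intro q
    have h1' : e * q - e * q * e = 0 := by
      have := heqf q
      rw [mul_sub, mul_one] at this
      exact this
    have h2' : q * e - e * q * e = 0 := by
      have := hfqe q
      rwa [sub_mul, one_mul, sub_mul] at this
    rw [sub_eq_zero] at h1' h2'
    rw [h1', h2']
  exact ⟨e, hne, hne1, hidem, hcomm⟩

end Semisimple

set_option maxHeartbeats 1600000 in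
theorem statement_1 {A : Type*} [Ring A] [IsSimpleRing A] [IsArtinianRing A]
    (R' : Subring A) (P : Set A) (hprime : IsStrictFractionalPrime R' P)
    (hGoldie : IsGoldieRing R') :
    (∀ s ∈ regularIn R', IsUnit s) ∧
    ∀ a : A, ∃ s ∈ regularIn R', ∃ r ∈ (R' : Set A), s * a = r := by
  obtain ⟨⟨⟨hPsub, hP0, hPadd, hPneg, hPml, hPmr⟩, hT2⟩, hfrac⟩ := hprime
  obtain ⟨ore1, ore2, hloc⟩ := hGoldie
  have part1 : ∀ s ∈ regularIn R', IsUnit s := fun s hs =>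
    dub_isUnit hfrac ore2 ⟨s, hs.1⟩ (dub_nzd_of_regular hs)
  refine ⟨part1, ?_⟩
  have hone_reg : (1 : A) ∈ regularIn R' :=
    ⟨R'.one_mem, fun y _ h => by simpa using h, fun y _ h => by simpa using h⟩
  have finish_R : (∀ z : A, z ∈ R') →
      ∀ a : A, ∃ s ∈ regularIn R', ∃ r ∈ (R' : Set A), s * a = r := by
    intro hall a
    exact ⟨1, hone_reg, a, hall a, one_mul a⟩
  set B := fracSubring R' ore1 with hBdef
  haveI hssB : IsSemisimpleRing B := fracSubring_isSemisimple hfrac ore2 ore1 hloc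
  have hR'B : ∀ x ∈ R', x ∈ B := fun x hx => R'_le_fracSubring hx
  have finish_B : (∀ z : A, z ∈ B) →
      ∀ a : A, ∃ s ∈ regularIn R', ∃ r ∈ (R' : Set A), s * a = r := by
    intro hall a
    obtain ⟨s, hs, hsa⟩ := hall a
    exact ⟨(s : A), dub_regular_of_isUnit s.2 (dub_isUnit hfrac ore2 s hs), (s : A) * a, hsa, rfl⟩
  obtain ⟨e0, he0ne, he0idem, hcorner_div⟩ := dub_exists_corner_div B
  set e : A := (e0 : A) with heDef
  have heB : e ∈ B := e0.2
  have heidem : e * e = e := by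
    have := congrArg Subtype.val he0idem
    push_cast at this
    exact this
  have hene : e ≠ 0 := fun h => he0ne (Subtype.ext h)
  have hee : ∀ X : A, e * (e * X) = e * X := fun X => by rw [← mul_assoc, heidem]
  have hsandA : ∀ p : A, e * (e * p * e) * e = e * p * e := by
    intro p
    have h7 : e * (e * p * e) * e = e * e * p * (e * e) := by simp only [mul_assoc]
    rw [h7, heidem]
  set Jgen : Set A := {x | ∃ u ∈ B, ∃ v ∈ B, x = u * e * v} with hJgenDef
  have heJ : e ∈ AddSubgroup.closure Jgen :=
    AddSubgroup.subset_closure ⟨1, B.one_mem, 1, B.one_mem, by rw [one_mul, mul_one]⟩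
  by_cases h1J : (1 : A) ∈ AddSubgroup.closure Jgen
  · -- In this case `A = B`.
    have hcornerB : ∀ w : A, e * w * e ∈ B := by
      intro w
      by_cases hw0 : e * w * e = 0
      · rw [hw0]; exact B.zero_mem
      obtain ⟨x, hx, y, hy, hcne, hcmem⟩ := hfrac _ hw0
      set c : A := x * (e * w * e) * y with hcDef
      have hnv : ¬ (∀ u ∈ B, ∀ v ∈ B, e * u * c * v * e = 0) := by
        intro hall
        apply hcne
        have main : ∀ ξ ∈ AddSubgroup.closure Jgen, ∀ η ∈ AddSubgroup.closure Jgen,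
            ξ * c * η = 0 := by
          intro ξ hξ
          induction hξ using AddSubgroup.closure_induction with
          | mem p hp =>
            obtain ⟨u1, hu1, v1, hv1, rfl⟩ := hp
            intro η hη
            induction hη using AddSubgroup.closure_induction with
            | mem q hq =>
              obtain ⟨u2, hu2, v2, hv2, rfl⟩ := hq
              have h0 := hall v1 hv1 u2 hu2
              have h0' : e * (v1 * (c * (u2 * (e * v2)))) = 0 := by
                have h1 := congrArg (fun t => t * v2) h0
                simp only [mul_assoc, zero_mul] at h1
                exact h1
              calc (u1 * e * v1) * c * (u2 * e * v2)
                  = u1 * (e * (v1 * (c * (u2 * (e * v2))))) := by simp only [mul_assoc]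
                _ = 0 := by rw [h0', mul_zero]
            | zero => simp
            | add q1 q2 hq1 hq2 ih1 ih2 => rw [mul_add, ih1, ih2, add_zero]
            | neg q1 hq1 ih => rw [mul_neg, ih, neg_zero]
          | zero => intro η hη; simp
          | add p1 p2 hp1 hp2 ih1 ih2 =>
            intro η hη
            have h3 : (p1 + p2) * c * η = p1 * c * η + p2 * c * η := by
              rw [add_mul, add_mul]
            rw [h3, ih1 η hη, ih2 η hη, add_zero]
          | neg p1 hp1 ih =>
            intro η hη
            have h3 : (-p1) * c * η = -(p1 * c * η) := by rw [neg_mul, neg_mul]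
            rw [h3, ih η hη, neg_zero]
        have := main 1 h1J 1 h1J
        simpa using this
      push_neg at hnv
      obtain ⟨u, hu, v, hv, hd⟩ := hnv
      set d : A := e * u * c * v * e with hdDef
      have hcB : c ∈ B := hR'B c hcmem
      have hdB : d ∈ B :=
        B.mul_mem (B.mul_mem (B.mul_mem (B.mul_mem heB hu) hcB) hv) heB
      have hid : d = (e * u * x * e) * (e * w * e) * (e * y * v * e) := by
        rw [hdDef, hcDef]
        simp only [mul_assoc]
        rw [hee, hee]
      set d1 : A := e * u * x * e with hd1Def
      set d2 : A := e * y * v * e with hd2Def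
      have hd1B : d1 ∈ B :=
        B.mul_mem (B.mul_mem (B.mul_mem heB hu) (hR'B x hx)) heB
      have hd2B : d2 ∈ B :=
        B.mul_mem (B.mul_mem (B.mul_mem heB (hR'B y hy)) hv) heB
      have hd1ne : d1 ≠ 0 := by
        intro h
        apply hd
        rw [hid, h, zero_mul, zero_mul]
      have hd2ne : d2 ≠ 0 := by
        intro h
        apply hd
        rw [hid, h, mul_zero]
      have hd1corner : e * d1 * e = d1 := by
        rw [hd1Def]
        have := hsandA (u * x)
        simp only [mul_assoc] at this ⊢
        exact this
      have hd2corner : e * d2 * e = d2 := by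
        rw [hd2Def]
        have := hsandA (y * v)
        simp only [mul_assoc] at this ⊢
        exact this
      obtain ⟨v1, hv1form, hv1l, hv1r⟩ := hcorner_div ⟨d1, hd1B⟩
        (fun h => hd1ne (congrArg Subtype.val h))
        (by apply Subtype.ext; push_cast; exact hd1corner)
      obtain ⟨v2, hv2form, hv2l, hv2r⟩ := hcorner_div ⟨d2, hd2B⟩
        (fun h => hd2ne (congrArg Subtype.val h))
        (by apply Subtype.ext; push_cast; exact hd2corner)
      have hv1lA : (v1 : A) * d1 = e := by
        have := congrArg Subtype.val hv1l
        push_cast at this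
        exact this
      have hv2rA : d2 * (v2 : A) = e := by
        have := congrArg Subtype.val hv2r
        push_cast at this
        exact this
      have hfinal : (v1 : A) * d * (v2 : A) = e * w * e := by
        rw [hid]
        calc (v1 : A) * (d1 * (e * w * e) * d2) * (v2 : A)
            = ((v1 : A) * d1) * ((e * (w * e)) * (d2 * (v2 : A))) := by simp only [mul_assoc]
          _ = e * ((e * (w * e)) * e) := by rw [hv1lA, hv2rA]
          _ = e * w * e := by
              have := hsandA w
              simp only [mul_assoc] at this ⊢
              exact this
      rw [← hfinal]
      exact B.mul_mem (B.mul_mem v1.2 hdB) v2.2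
    -- globalization: every element of `A` lies in `B`
    have hall : ∀ z : A, z ∈ B := by
      intro z
      have main : ∀ ξ ∈ AddSubgroup.closure Jgen, ∀ η ∈ AddSubgroup.closure Jgen,
          ξ * z * η ∈ B := by
        intro ξ hξ
        induction hξ using AddSubgroup.closure_induction with
        | mem p hp =>
          obtain ⟨u1, hu1, v1, hv1, rfl⟩ := hp
          intro η hη
          induction hη using AddSubgroup.closure_induction with
          | mem q hq =>
            obtain ⟨u2, hu2, v2, hv2, rfl⟩ := hq
            have hmid := hcornerB (v1 * z * u2)
            have heq : (u1 * e * v1) * z * (u2 * e * v2)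
                = u1 * ((e * (v1 * z * u2) * e) * v2) := by
              simp only [mul_assoc]
            rw [heq]
            exact B.mul_mem hu1 (B.mul_mem hmid hv2)
          | zero => simpa using B.zero_mem
          | add q1 q2 hq1 hq2 ih1 ih2 => rw [mul_add]; exact B.add_mem ih1 ih2
          | neg q1 hq1 ih => rw [mul_neg]; exact B.neg_mem ih
        | zero => intro η hη; simpa using B.zero_mem
        | add p1 p2 hp1 hp2 ih1 ih2 =>
          intro η hη
          have h3 : (p1 + p2) * z * η = p1 * z * η + p2 * z * η := by rw [add_mul, add_mul]
          rw [h3]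
          exact B.add_mem (ih1 η hη) (ih2 η hη)
        | neg p1 hp1 ih =>
          intro η hη
          have h3 : (-p1) * z * η = -(p1 * z * η) := by rw [neg_mul, neg_mul]
          rw [h3]
          exact B.neg_mem (ih η hη)
      have := main 1 h1J 1 h1J
      simpa using this
    exact finish_B hall
  · -- proper case: produce a nontrivial central idempotent of `B`
    have hJml : ∀ b ∈ B, ∀ x ∈ AddSubgroup.closure Jgen, b * x ∈ AddSubgroup.closure Jgen := by
      intro b hb x hxmem
      induction hxmem using AddSubgroup.closure_induction with
      | mem p hp =>
        obtain ⟨u1, hu1, v1, hv1, rfl⟩ := hp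
        exact AddSubgroup.subset_closure ⟨b * u1, B.mul_mem hb hu1, v1, hv1, by
          simp only [mul_assoc]⟩
      | zero => simpa using AddSubgroup.zero_mem _
      | add p1 p2 hp1 hp2 ih1 ih2 => rw [mul_add]; exact AddSubgroup.add_mem _ ih1 ih2
      | neg p1 hp1 ih => rw [mul_neg]; exact AddSubgroup.neg_mem _ ih
    have hJmr : ∀ b ∈ B, ∀ x ∈ AddSubgroup.closure Jgen, x * b ∈ AddSubgroup.closure Jgen := by
      intro b hb x hxmem
      induction hxmem using AddSubgroup.closure_induction with
      | mem p hp =>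
        obtain ⟨u1, hu1, v1, hv1, rfl⟩ := hp
        exact AddSubgroup.subset_closure ⟨u1, hu1, v1 * b, B.mul_mem hv1 hb, by
          simp only [mul_assoc]⟩
      | zero => simpa using AddSubgroup.zero_mem _
      | add p1 p2 hp1 hp2 ih1 ih2 => rw [add_mul]; exact AddSubgroup.add_mem _ ih1 ih2
      | neg p1 hp1 ih => rw [neg_mul]; exact AddSubgroup.neg_mem _ ih
    let Jsub : Submodule B B :=
      { carrier := {x : B | (x : A) ∈ AddSubgroup.closure Jgen}
        add_mem' := fun hx hy => by
          simp only [Set.mem_setOf_eq] at *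
          push_cast
          exact AddSubgroup.add_mem _ hx hy
        zero_mem' := by
          simp only [Set.mem_setOf_eq]
          push_cast
          exact AddSubgroup.zero_mem _
        smul_mem' := fun c x hx => by
          simp only [Set.mem_setOf_eq] at *
          have : ((c • x : B) : A) = (c : A) * (x : A) := by push_cast; rfl
          rw [this]
          exact hJml (c : A) c.2 (x : A) hx }
    have hJr : ∀ x ∈ Jsub, ∀ q : B, x * q ∈ Jsub := by
      intro x hx q
      show ((x * q : B) : A) ∈ AddSubgroup.closure Jgen
      push_cast
      exact hJmr (q : A) q.2 (x : A) hx
    have hJbot : Jsub ≠ ⊥ := by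
      intro h
      have h1 : e0 ∈ Jsub := heJ
      rw [h] at h1
      exact he0ne ((Submodule.mem_bot B).mp h1)
    have hJtop : Jsub ≠ ⊤ := by
      intro h
      apply h1J
      have h1 : (1 : B) ∈ Jsub := h ▸ Submodule.mem_top
      have h2 : ((1 : B) : A) ∈ AddSubgroup.closure Jgen := h1
      simpa using h2
    obtain ⟨ε0, hε0ne, hε0ne1, hε0idem, hε0comm⟩ := dub_central_idem B Jsub hJr hJbot hJtop
    set ε : A := (ε0 : A) with hεDef
    have hεB : ε ∈ B := ε0.2
    have hεidemA : ε * ε = ε := by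
      have := congrArg Subtype.val hε0idem; push_cast at this; exact this
    have hεneA : ε ≠ 0 := fun h => hε0ne (Subtype.ext h)
    have hεne1A : ε ≠ 1 := fun h => hε0ne1 (Subtype.ext h)
    have hcommA : ∀ b ∈ B, ε * b = b * ε := by
      intro b hb
      have := congrArg Subtype.val (hε0comm ⟨b, hb⟩)
      push_cast at this
      exact this
    have hv1A : ∀ ρ ∈ R', ε * ρ * (1 - ε) = 0 := by
      intro ρ hρ
      rw [hcommA ρ (hR'B ρ hρ), mul_sub, mul_one, mul_assoc, hεidemA, sub_self]
    have hv2A : ∀ ρ ∈ R', (1 - ε) * ρ * ε = 0 := by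
      intro ρ hρ
      rw [sub_mul, one_mul, hcommA ρ (hR'B ρ hρ), sub_mul, mul_assoc, hεidemA, sub_self]
    have case1 : (∀ a : A, a * ε ∈ P) ∨ (∀ a : A, (1 - ε) * a ∈ P) := by
      by_cases hL : ∀ a : A, a * ε ∈ P
      · exact Or.inl hL
      push_neg at hL
      obtain ⟨a₀, ha₀⟩ := hL
      right
      intro a₁
      have hprem : ∀ ρ ∈ R', (a₀ * ε) * ρ * ((1 - ε) * a₁) ∈ P := by
        intro ρ hρ
        have h1 := congrArg (fun t => a₀ * t * a₁) (hv1A ρ hρ)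
        simp only [mul_assoc, mul_zero, zero_mul] at h1
        have h2 : (a₀ * ε) * ρ * ((1 - ε) * a₁) = 0 := by
          simp only [mul_assoc]
          exact h1
        rw [h2]
        exact hP0
      rcases hT2 _ _ hprem with h | h
      · exact absurd h ha₀
      · exact h
    have case2 : (∀ a : A, a * (1 - ε) ∈ P) ∨ (∀ a : A, ε * a ∈ P) := by
      by_cases hL : ∀ a : A, a * (1 - ε) ∈ P
      · exact Or.inl hL
      push_neg at hL
      obtain ⟨a₀, ha₀⟩ := hL
      right
      intro a₁
      have hprem : ∀ ρ ∈ R', (a₀ * (1 - ε)) * ρ * (ε * a₁) ∈ P := by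
        intro ρ hρ
        have h1 := congrArg (fun t => a₀ * t * a₁) (hv2A ρ hρ)
        simp only [mul_assoc, mul_zero, zero_mul] at h1
        have h2 : (a₀ * (1 - ε)) * ρ * (ε * a₁) = 0 := by
          simp only [mul_assoc]
          exact h1
        rw [h2]
        exact hP0
      rcases hT2 _ _ hprem with h | h
      · exact absurd h ha₀
      · exact h
    have homega : ∀ g : A, g ≠ 0 → g * g = g → (∀ a : A, a * g ∈ P) →
        (∀ a : A, g * a ∈ P) → ∀ z : A, z ∈ R' := by
      intro g hg hgid hLg hRg z
      have hgg : ∀ X : A, g * (g * X) = g * X := fun X => by rw [← mul_assoc, hgid]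
      set Kgen : Set A := {x | ∃ a b : A, x = a * g * b} with hKgenDef
      have hKml : ∀ (cc : A), ∀ x ∈ AddSubgroup.closure Kgen,
          cc * x ∈ AddSubgroup.closure Kgen := by
        intro cc x hxmem
        induction hxmem using AddSubgroup.closure_induction with
        | mem p hp =>
          obtain ⟨a, b, rfl⟩ := hp
          exact AddSubgroup.subset_closure ⟨cc * a, b, by simp only [mul_assoc]⟩
        | zero => simpa using AddSubgroup.zero_mem _
        | add p1 p2 hp1 hp2 ih1 ih2 => rw [mul_add]; exact AddSubgroup.add_mem _ ih1 ih2
        | neg p1 hp1 ih => rw [mul_neg]; exact AddSubgroup.neg_mem _ ih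
      have hKmr : ∀ (cc : A), ∀ x ∈ AddSubgroup.closure Kgen,
          x * cc ∈ AddSubgroup.closure Kgen := by
        intro cc x hxmem
        induction hxmem using AddSubgroup.closure_induction with
        | mem p hp =>
          obtain ⟨a, b, rfl⟩ := hp
          exact AddSubgroup.subset_closure ⟨a, b * cc, by simp only [mul_assoc]⟩
        | zero => simpa using AddSubgroup.zero_mem _
        | add p1 p2 hp1 hp2 ih1 ih2 => rw [add_mul]; exact AddSubgroup.add_mem _ ih1 ih2
        | neg p1 hp1 ih => rw [neg_mul]; exact AddSubgroup.neg_mem _ ih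
      let K : TwoSidedIdeal A := TwoSidedIdeal.mk' (AddSubgroup.closure Kgen)
        (AddSubgroup.zero_mem _)
        (fun hx hy => AddSubgroup.add_mem _ hx hy)
        (fun hx => AddSubgroup.neg_mem _ hx)
        (fun {xx yy} hy => hKml xx yy hy)
        (fun {xx yy} hx => hKmr yy xx hx)
      have hKmem : ∀ x : A, x ∈ K ↔ x ∈ AddSubgroup.closure Kgen := fun x =>
        TwoSidedIdeal.mem_mk' _ _ _ _ _ _ x
      haveI : IsSimpleOrder (TwoSidedIdeal A) := IsSimpleRing.simple
      rcases eq_bot_or_eq_top K with hbot | htop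
      · exfalso
        have hgK : g ∈ K := (hKmem g).mpr
          (AddSubgroup.subset_closure ⟨1, 1, by rw [one_mul, mul_one]⟩)
        rw [hbot] at hgK
        exact hg ((TwoSidedIdeal.mem_bot A).mp hgK)
      · have h1K : (1 : A) ∈ AddSubgroup.closure Kgen := by
          have : (1 : A) ∈ K := by rw [htop]; exact TwoSidedIdeal.mem_top A
          exact (hKmem 1).mp this
        have main : ∀ x ∈ AddSubgroup.closure Kgen, z * x ∈ R' := by
          intro x hxmem
          induction hxmem using AddSubgroup.closure_induction with
          | mem p hp =>
            obtain ⟨a, b, rfl⟩ := hp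
            have heq2 : (z * a * g) * (g * b) = z * (a * g * b) := by
              simp only [mul_assoc]
              rw [hgg]
            rw [← heq2]
            exact R'.mul_mem (hPsub (hLg (z * a))) (hPsub (hRg b))
          | zero => simpa using R'.zero_mem
          | add p1 p2 hp1 hp2 ih1 ih2 => rw [mul_add]; exact R'.add_mem ih1 ih2
          | neg p1 hp1 ih => rw [mul_neg]; exact R'.neg_mem ih
        have := main 1 h1K
        simpa using this
    rcases case1 with hL1 | hR1 <;> rcases case2 with hL2 | hR2
    · apply finish_R
      intro z
      have hz : z = z * ε + z * (1 - ε) := by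
        rw [← mul_add]
        simp
      rw [hz]
      exact hPsub (hPadd _ (hL1 z) _ (hL2 z))
    · exact finish_R (homega ε hεneA hεidemA hL1 hR2)
    · have h1εne : (1 - ε) ≠ 0 := sub_ne_zero.mpr (Ne.symm hεne1A)
      have h1εidem : (1 - ε) * (1 - ε) = 1 - ε := by
        rw [sub_mul, one_mul, mul_sub, mul_one, hεidemA]
        abel
      exact finish_R (homega (1 - ε) h1εne h1εidem hL2 hR1)
    · apply finish_R
      intro z
      have hz : z = ε * z + (1 - ε) * z := by
        rw [← add_mul]
        simp
      rw [hz]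
      exact hPsub (hPadd _ (hR2 z) _ (hR1 z))
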